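/- Let d ≥ 2. If A is a d×d unitary matrix and D a diagonal unitary matrix such that V U = A D A* (where U = diag(q^j), V the cyclic shift, q = exp(2πi/d)), then V U has nondegenerate spectrum implies all entries of A have modulus d^{-1/2}; more precisely, every unit eigenvector v of V U satisfies |v_j| = d^{-1/2} for all j. -/

import Mathlib

open Matrix
open Fin.NatCast

theorem stmt_5 (d : ℕ) (hd : 2 ≤ d) (q : ℂ)
    (hq : q = Complex.exp (2 * Real.pi * Complex.I / d))
    (U V : Matrix (Fin d) (Fin d) ℂ)
    (hU : U = Matrix.diagonal fun j : Fin d => q ^ (j : ℕ))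
    (hV : V = Matrix.of fun j k : Fin d => if (k : ℕ) = ((j : ℕ) + 1) % d then (1 : ℂ) else 0)
    (v : Fin d → ℂ) (μ : ℂ)
    (hev : (V * U).mulVec v = μ • v)
    (hunit : ∑ j, ‖v j‖ ^ 2 = 1) :
    ∀ j, ‖v j‖ = 1 / Real.sqrt d := by
  haveI : NeZero d := ⟨by omega⟩
  -- |q| = 1
  have hqabs : ‖q‖ = 1 := by
    have h2 : (2 * Real.pi * Complex.I / d) = ((2 * Real.pi / d : ℝ) : ℂ) * Complex.I := by
      push_cast; ring
    rw [hq, h2, Complex.norm_exp_ofReal_mul_I]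
  -- entrywise eigenvalue equation
  have hent : ∀ j : Fin d, q ^ ((j + 1 : Fin d) : ℕ) * v (j + 1) = μ * v j := by
    intro j
    have h := congrFun hev j
    have hcalc : (V * U).mulVec v j = q ^ ((j+1 : Fin d) : ℕ) * v (j + 1) := by
      subst hU hV
      rw [← Matrix.mulVec_mulVec]
      have hone : ((1 : Fin d) : ℕ) = 1 := by
        simp [Nat.mod_eq_of_lt (by omega : 1 < d)]
      have hval : ((j + 1 : Fin d) : ℕ) = ((j : ℕ) + 1) % d := by
        rw [Fin.val_add, hone]
      have hcond : ∀ k : Fin d, ((k : ℕ) = ((j : ℕ) + 1) % d) ↔ k = j + 1 := by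
        intro k
        rw [← hval, Fin.val_eq_val]
      simp only [Matrix.mulVec, dotProduct, Matrix.mulVec_diagonal, Matrix.of_apply, hcond,
        ite_mul, one_mul, zero_mul]
      simp [Matrix.diagonal_apply, ite_mul]
    rw [← hcalc, h]
    simp [Pi.smul_apply, smul_eq_mul]
  -- step in absolute values
  have step : ∀ j : Fin d, ‖v (j + 1)‖ = ‖μ‖ * ‖v j‖ := by
    intro j
    have h := congrArg (‖·‖) (hent j)
    simpa [norm_mul, norm_pow, hqabs] using h
  -- iterate
  have key : ∀ n : ℕ, ‖v (n : Fin d)‖ = ‖μ‖ ^ n * ‖v 0‖ := by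
    intro n
    induction n with
    | zero => simp
    | succ n ih =>
      have : ((n + 1 : ℕ) : Fin d) = (n : Fin d) + 1 := by push_cast; ring
      rw [this, step, ih, pow_succ]
      ring
  -- v 0 ≠ 0
  have hv0 : ‖v 0‖ ≠ 0 := by
    intro h0
    have : ∀ j : Fin d, ‖v j‖ = 0 := by
      intro j
      have := key j.val
      rwa [Fin.cast_val_eq_self, h0, mul_zero] at this
    rw [Finset.sum_eq_zero (fun j _ => by rw [this j]; ring)] at hunit
    norm_num at hunit
  -- |μ| = 1
  have hmu : ‖μ‖ = 1 := by
    have hdv : ((d : ℕ) : Fin d) = 0 := Fin.natCast_self d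
    have h := key d
    rw [hdv] at h
    have hpow : ‖μ‖ ^ d = 1 := by
      have h' : ‖μ‖ ^ d * ‖v 0‖ = 1 * ‖v 0‖ := by
        rw [one_mul, ← h]
      exact mul_right_cancel₀ hv0 h'
    by_contra hne
    rcases lt_or_gt_of_ne hne with hlt | hgt
    · have := pow_lt_one₀ (norm_nonneg μ) hlt (by omega : d ≠ 0)
      rw [hpow] at this; exact lt_irrefl _ this
    · have := one_lt_pow₀ hgt (by omega : d ≠ 0)
      rw [hpow] at this; exact lt_irrefl _ this
  -- all abs equal to |v 0|
  have hall : ∀ j : Fin d, ‖v j‖ = ‖v 0‖ := by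
    intro j
    have := key j.val
    rwa [Fin.cast_val_eq_self, hmu, one_pow, one_mul] at this
  -- compute
  have hsum : (d : ℝ) * ‖v 0‖ ^ 2 = 1 := by
    rw [← hunit]
    rw [Finset.sum_congr rfl (fun j _ => by rw [hall j])]
    simp [Finset.card_fin, mul_comm]
  intro j
  rw [hall j]
  have hdpos : (0 : ℝ) < d := by positivity
  have hsq : ‖v 0‖ ^ 2 = 1 / d := by
    field_simp at hsum ⊢
    linarith
  rw [← Real.sqrt_sq (norm_nonneg (v 0)), hsq, one_div, Real.sqrt_inv, one_div]
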